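/- arXiv:1605.09541 — 3 statements merged into one kernel-verified Lean document; each statement's English description precedes it below -/
import Mathlib

section
/- Σ_{n=1}^{∞} ζ(2n)·(2n−1)/4^n = π²/8 − 1/2. -/
open Real

/-- Real Riemann zeta values via the series `∑ 1/k^m`. -/
noncomputable def zetaR (m : ℕ) : ℝ := ∑' k : ℕ, 1 / ((k : ℝ) + 1) ^ m

lemma basel_succ : Summable (fun k : ℕ => 1 / ((k : ℝ) + 1) ^ 2) := by
  have h := summable_one_div_nat_pow.mpr (by norm_num : 1 < 2)
  have := (summable_nat_add_iff 1).mpr h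
  exact this.congr (fun k => by push_cast; ring_nf)

lemma odd_sq_sum : HasSum (fun k : ℕ => 1 / (2 * (k : ℝ) + 1) ^ 2) (π ^ 2 / 8) := by
  have htot : HasSum (fun n : ℕ => (1 : ℝ) / (n : ℝ) ^ 2) (π ^ 2 / 6) := hasSum_zeta_two
  have he : HasSum (fun k : ℕ => (1 : ℝ) / ((2 * k : ℕ) : ℝ) ^ 2) (π ^ 2 / 24) := by
    have h := htot.mul_left (1 / 4)
    have h2 : HasSum (fun k : ℕ => (1 : ℝ) / ((2 * k : ℕ) : ℝ) ^ 2) (1 / 4 * (π ^ 2 / 6)) := by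
      refine h.congr_fun fun k => ?_
      push_cast
      ring
    convert h2 using 1; ring
  have hsum : Summable (fun k : ℕ => 1 / (2 * (k : ℝ) + 1) ^ 2) := by
    refine Summable.of_nonneg_of_le (fun k => by positivity) (fun k => ?_) basel_succ
    apply one_div_le_one_div_of_le (by positivity)
    nlinarith [Nat.cast_nonneg (α := ℝ) k]
  obtain ⟨b, hb⟩ := hsum
  have hb' : HasSum (fun k : ℕ => (1 : ℝ) / ((2 * k + 1 : ℕ) : ℝ) ^ 2) b := by
    refine hb.congr_fun fun k => ?_
    push_cast; ring
  have hcomb : HasSum (fun n : ℕ => (1 : ℝ) / (n : ℝ) ^ 2) (π ^ 2 / 24 + b) :=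
    HasSum.even_add_odd (f := fun n : ℕ => (1 : ℝ) / (n : ℝ) ^ 2) he hb'
  have := hcomb.unique htot
  have hbval : b = π ^ 2 / 8 := by linarith
  rwa [hbval] at hb

lemma inner_hasSum (k : ℕ) :
    HasSum (fun n : ℕ => (2 * (n : ℝ) + 1) * (1 / (4 * ((k : ℝ) + 1) ^ 2)) ^ (n + 1))
      (1 / 2 * (1 / (2 * (k : ℝ) + 1) ^ 2 + 1 / (2 * (k : ℝ) + 3) ^ 2)) := by
  have hk0 : (0 : ℝ) ≤ (k : ℝ) := Nat.cast_nonneg k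
  set t : ℝ := 1 / (4 * ((k : ℝ) + 1) ^ 2) with ht
  have ht0 : 0 < t := by rw [ht]; positivity
  have ht1 : t < 1 := by
    rw [ht, div_lt_one (by positivity)]
    nlinarith
  have hn : ‖t‖ < 1 := by rw [Real.norm_eq_abs, abs_of_pos ht0]; exact ht1
  have h1 : HasSum (fun n : ℕ => (n : ℝ) * t ^ n) (t / (1 - t) ^ 2) :=
    hasSum_coe_mul_geometric_of_norm_lt_one hn
  have h2 : HasSum (fun n : ℕ => t ^ n) (1 - t)⁻¹ := hasSum_geometric_of_lt_one ht0.le ht1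
  have h3 := ((h1.mul_left 2).add h2).mul_left t
  have hfun : (fun n : ℕ => t * (2 * ((n : ℝ) * t ^ n) + t ^ n)) =
      fun n : ℕ => (2 * (n : ℝ) + 1) * t ^ (n + 1) := by
    funext n; ring
  rw [hfun] at h3
  convert h3 using 1
  case e'_3 => rfl
  have h2k1 : (2 * (k : ℝ) + 1) ≠ 0 := by positivity
  have h2k3 : (2 * (k : ℝ) + 3) ≠ 0 := by positivity
  have hk4 : (4 * ((k : ℝ) + 1) ^ 2) ≠ 0 := by positivity
  have he1 : 1 - t = (2 * (k : ℝ) + 1) * (2 * (k : ℝ) + 3) / (4 * ((k : ℝ) + 1) ^ 2) := by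
    rw [ht]; field_simp; ring
  rw [he1, ht]
  field_simp
  ring

theorem zeta_series_four_linear :
    ∑' n : ℕ, zetaR (2 * (n + 1)) * (2 * ((n : ℝ) + 1) - 1) / 4 ^ (n + 1) =
      π ^ 2 / 8 - 1 / 2 := by
  classical
  set f : ℕ → ℕ → ℝ := fun n k => (2 * (n : ℝ) + 1) * (1 / (4 * ((k : ℝ) + 1) ^ 2)) ^ (n + 1)
    with hf
  have hfnonneg : ∀ n k, 0 ≤ f n k := fun n k => by
    rw [hf]; positivity
  have htle : ∀ k : ℕ, (1 : ℝ) / (4 * ((k : ℝ) + 1) ^ 2) ≤ 1 / (((k : ℝ) + 1) ^ 2) := by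
    intro k
    have hk0 : (0 : ℝ) ≤ (k : ℝ) := Nat.cast_nonneg k
    apply one_div_le_one_div_of_le (by positivity)
    nlinarith
  have htlt : ∀ k : ℕ, (1 : ℝ) / (4 * ((k : ℝ) + 1) ^ 2) ≤ 1 := by
    intro k
    have hk0 : (0 : ℝ) ≤ (k : ℝ) := Nat.cast_nonneg k
    rw [div_le_one (by positivity)]
    nlinarith
  have ht0 : ∀ k : ℕ, (0 : ℝ) ≤ 1 / (4 * ((k : ℝ) + 1) ^ 2) := fun k => by positivity
  -- each row (fixed n) is summable in k
  have hrow : ∀ n : ℕ, Summable (fun k => f n k) := by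
    intro n
    rw [hf]
    apply Summable.mul_left
    refine Summable.of_nonneg_of_le (fun k => by positivity) (fun k => ?_) basel_succ
    calc (1 / (4 * ((k : ℝ) + 1) ^ 2)) ^ (n + 1)
        ≤ (1 / (4 * ((k : ℝ) + 1) ^ 2)) ^ 1 :=
          pow_le_pow_of_le_one (ht0 k) (htlt k) (by omega)
      _ = 1 / (4 * ((k : ℝ) + 1) ^ 2) := pow_one _
      _ ≤ 1 / (((k : ℝ) + 1) ^ 2) := htle k
  -- the sequence of row-sums is summable
  have hqs : Summable (fun n : ℕ => (2 * (n : ℝ) + 1) * (1 / 4 : ℝ) ^ (n + 1)) := by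
    have := (inner_hasSum 0).summable
    refine this.congr fun n => ?_
    norm_num
  set C : ℝ := ∑' k : ℕ, 1 / ((k : ℝ) + 1) ^ 2 with hC
  have hcol : Summable (fun n : ℕ => ∑' k, f n k) := by
    refine Summable.of_nonneg_of_le (fun n => tsum_nonneg fun k => hfnonneg n k)
      (fun n => ?_) (hqs.mul_right C)
    have hnn : (0 : ℝ) ≤ 2 * (n : ℝ) + 1 := by positivity
    have hbd : ∀ k : ℕ, f n k ≤ (2 * (n : ℝ) + 1) * (1 / 4 : ℝ) ^ (n + 1) * (1 / ((k : ℝ) + 1) ^ 2) := by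
      intro k
      have hk0 : (0 : ℝ) ≤ (k : ℝ) := Nat.cast_nonneg k
      simp only [hf]
      have hsplit : (1 / (4 * ((k : ℝ) + 1) ^ 2)) ^ (n + 1) =
          (1 / 4 : ℝ) ^ (n + 1) * (1 / (((k : ℝ) + 1) ^ 2)) ^ (n + 1) := by
        rw [← mul_pow]
        congr 1
        field_simp
      rw [hsplit, ← mul_assoc]
      have hle : (1 / (((k : ℝ) + 1) ^ 2)) ^ (n + 1) ≤ 1 / (((k : ℝ) + 1) ^ 2) := by
        calc (1 / (((k : ℝ) + 1) ^ 2)) ^ (n + 1)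
            ≤ (1 / (((k : ℝ) + 1) ^ 2)) ^ 1 := by
              apply pow_le_pow_of_le_one (by positivity) ?_ (by omega)
              rw [div_le_one (by positivity)]
              nlinarith
          _ = 1 / (((k : ℝ) + 1) ^ 2) := pow_one _
      exact mul_le_mul_of_nonneg_left hle (by positivity)
    calc ∑' k, f n k
        ≤ ∑' k : ℕ, (2 * (n : ℝ) + 1) * (1 / 4 : ℝ) ^ (n + 1) * (1 / ((k : ℝ) + 1) ^ 2) :=
          Summable.tsum_le_tsum hbd (hrow n) (basel_succ.mul_left _)
      _ = (2 * (n : ℝ) + 1) * (1 / 4 : ℝ) ^ (n + 1) * C := by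
          rw [tsum_mul_left, hC]
  have hsummable : Summable (Function.uncurry f) := by
    refine (summable_prod_of_nonneg fun p => hfnonneg p.1 p.2).mpr ⟨fun n => hrow n, ?_⟩
    exact hcol
  -- rewrite each term of the LHS as an inner sum
  have hterm : ∀ n : ℕ,
      zetaR (2 * (n + 1)) * (2 * ((n : ℝ) + 1) - 1) / 4 ^ (n + 1) = ∑' k, f n k := by
    intro n
    rw [zetaR, ← tsum_mul_right, ← tsum_div_const]
    refine tsum_congr fun k => ?_
    have hk0 : (0 : ℝ) ≤ (k : ℝ) := Nat.cast_nonneg k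
    simp only [hf]
    have hpow : (1 / (4 * ((k : ℝ) + 1) ^ 2)) ^ (n + 1) =
        1 / (4 ^ (n + 1) * ((k : ℝ) + 1) ^ (2 * (n + 1))) := by
      rw [div_pow, mul_pow, one_pow, pow_mul]
    rw [hpow]
    have h4 : (4 : ℝ) ^ (n + 1) ≠ 0 := by positivity
    have hk1 : ((k : ℝ) + 1) ^ (2 * (n + 1)) ≠ 0 := by positivity
    field_simp
    ring
  calc ∑' n : ℕ, zetaR (2 * (n + 1)) * (2 * ((n : ℝ) + 1) - 1) / 4 ^ (n + 1)
      = ∑' n : ℕ, ∑' k : ℕ, f n k := tsum_congr hterm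
    _ = ∑' k : ℕ, ∑' n : ℕ, f n k := (Summable.tsum_comm hsummable).symm
    _ = ∑' k : ℕ, 1 / 2 * (1 / (2 * (k : ℝ) + 1) ^ 2 + 1 / (2 * (k : ℝ) + 3) ^ 2) :=
        tsum_congr fun k => (inner_hasSum k).tsum_eq
    _ = π ^ 2 / 8 - 1 / 2 := by
        have h1 := odd_sq_sum
        have h2 : HasSum (fun k : ℕ => 1 / (2 * (k : ℝ) + 3) ^ 2) (π ^ 2 / 8 - 1) := by
          have h3 : HasSum (fun n : ℕ => 1 / (2 * ((n + 1 : ℕ) : ℝ) + 1) ^ 2) (π ^ 2 / 8 - 1) := by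
            refine (hasSum_nat_add_iff (f := fun k : ℕ => 1 / (2 * (k : ℝ) + 1) ^ 2) 1).mpr ?_
            convert odd_sq_sum using 1
            case e'_3 => rfl
            norm_num
          refine h3.congr_fun fun n => ?_
          push_cast
          ring_nf
        have h4 := (h1.add h2).mul_left (1 / 2 : ℝ)
        have := h4.tsum_eq
        rw [this]
        ring
end

section
/- For every even positive integer m, Σ_{n=1}^{∞} (ζ(2n)/(n·16^n)) · C(2n, m) = (1/m) · (ζ(m)(1 − 1/2^m) − 1), where C(2n, m) denotes the binomial coefficient. -/
open Real

lemma my_summable_zeta_term {m : ℕ} (hm : 2 ≤ m) :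
    Summable (fun k : ℕ => 1 / ((k : ℝ) + 1) ^ m) := by
  have h := Real.summable_one_div_nat_pow.2 (by omega : 1 < m)
  have h2 := (summable_nat_add_iff 1).2 h
  refine h2.congr fun k => ?_
  push_cast
  ring

lemma my_choose_le_two_pow (N k : ℕ) : N.choose k ≤ 2 ^ N := by
  rcases le_or_gt k N with h | h
  · calc N.choose k ≤ ∑ j ∈ Finset.range (N + 1), N.choose j :=
          Finset.single_le_sum (fun i _ => Nat.zero_le _) (Finset.mem_range.2 (by omega))
      _ = 2 ^ N := Nat.sum_range_choose N
  · rw [Nat.choose_eq_zero_of_lt h]; positivity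

lemma my_hasSum_choose_geom {x : ℝ} (hx : |x| < 1) (r : ℕ) :
    HasSum (fun j : ℕ => (j.choose r : ℝ) * x ^ j) (x ^ r / (1 - x) ^ (r + 1)) := by
  have h := hasSum_choose_mul_geometric_of_norm_lt_one (𝕜 := ℝ) r
    (by rwa [Real.norm_eq_abs] : ‖x‖ < 1)
  have h2 := h.mul_left (x ^ r)
  have h3 : HasSum (fun n : ℕ => (((n + r).choose r : ℝ)) * x ^ (n + r))
      (x ^ r * (1 / (1 - x) ^ (r + 1))) := by
    refine h2.congr_fun fun n => ?_
    rw [pow_add]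
    ring
  have h4 := (hasSum_nat_add_iff (f := fun j : ℕ => (j.choose r : ℝ) * x ^ j) r).1 h3
  have hz : ∑ i ∈ Finset.range r, ((i.choose r : ℝ)) * x ^ i = 0 := by
    apply Finset.sum_eq_zero
    intro i hi
    rw [Nat.choose_eq_zero_of_lt (Finset.mem_range.1 hi)]
    simp
  rw [hz, add_zero] at h4
  rw [mul_one_div] at h4
  exact h4

lemma my_hasSum_choose_odd {x : ℝ} (hx0 : 0 < x) (hx : x < 1) {r : ℕ} (hr : Odd r) :
    HasSum (fun n : ℕ => (((2 * n + 1).choose r : ℝ)) * x ^ (2 * n + 1))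
      (x ^ r / 2 * (1 / (1 - x) ^ (r + 1) + 1 / (1 + x) ^ (r + 1))) := by
  have hxabs : |x| < 1 := by rw [abs_of_pos hx0]; exact hx
  have hnx : |(-x)| < 1 := by rwa [abs_neg]
  have h1 := my_hasSum_choose_geom hxabs r
  have h2 := my_hasSum_choose_geom hnx r
  have h3 := (h1.sub h2).div_const 2
  set F : ℕ → ℝ := fun j => ((j.choose r : ℝ) * x ^ j - (j.choose r : ℝ) * (-x) ^ j) / 2 with hF
  have key : ∀ j ∉ Set.range (fun n : ℕ => 2 * n + 1), F j = 0 := by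
    intro j hj
    have hje : Even j := by
      rcases Nat.even_or_odd j with h | h
      · exact h
      · obtain ⟨c, hc⟩ := h
        exact absurd ⟨c, show 2 * c + 1 = j by omega⟩ hj
    simp only [hF, hje.neg_pow, sub_self, zero_div]
  have hinj : Function.Injective (fun n : ℕ => 2 * n + 1) := fun a b h => by simp only at h; omega
  have h4 := (hinj.hasSum_iff key).2 h3
  have hval : ((x ^ r / (1 - x) ^ (r + 1)) - ((-x) ^ r / (1 - (-x)) ^ (r + 1))) / 2
      = x ^ r / 2 * (1 / (1 - x) ^ (r + 1) + 1 / (1 + x) ^ (r + 1)) := by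
    rw [hr.neg_pow, show (1 : ℝ) - (-x) = 1 + x by ring]
    have h1x : (1 - x) ^ (r + 1) ≠ 0 := pow_ne_zero _ (by linarith)
    have h2x : (1 + x) ^ (r + 1) ≠ 0 := pow_ne_zero _ (by positivity)
    field_simp
    ring
  rw [hval] at h4
  refine h4.congr_fun fun n => ?_
  have : Odd (2 * n + 1) := ⟨n, by omega⟩
  simp only [hF, Function.comp, this.neg_pow]
  ring

lemma my_hasSum_inner {m : ℕ} (hm : Even m) (hm0 : 0 < m) {x : ℝ} (hx0 : 0 < x) (hx : x < 1) :
    HasSum (fun n : ℕ => (((2 * (n + 1)).choose m : ℝ)) / ((n : ℝ) + 1) * x ^ (2 * (n + 1)))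
      (1 / m * ((x / (1 - x)) ^ m + (x / (1 + x)) ^ m)) := by
  obtain ⟨r, hrm⟩ : ∃ r, m = r + 1 := ⟨m - 1, by omega⟩
  have hrodd : Odd r := by
    obtain ⟨c, hc⟩ := hm
    exact ⟨c - 1, by omega⟩
  subst hrm
  have h := (my_hasSum_choose_odd hx0 hx hrodd).mul_left (2 * x / (r + 1))
  have hm' : ((r : ℝ) + 1) ≠ 0 := by positivity
  have h1x : (1 : ℝ) - x ≠ 0 := by linarith
  have h2x : (1 : ℝ) + x ≠ 0 := by positivity
  have hval : (2 * x / ((r : ℝ) + 1)) * (x ^ r / 2 * (1 / (1 - x) ^ (r + 1) + 1 / (1 + x) ^ (r + 1)))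
      = 1 / ((r : ℝ) + 1) * ((x / (1 - x)) ^ (r + 1) + (x / (1 + x)) ^ (r + 1)) := by
    rw [div_pow, div_pow]
    field_simp
    ring
  rw [hval] at h
  have hcast : ((r + 1 : ℕ) : ℝ) = (r : ℝ) + 1 := by push_cast; ring
  rw [hcast]
  refine h.congr_fun fun n => ?_
  have key : ((2 * n + 2).choose (r + 1) : ℝ) * ((r : ℝ) + 1) = (2 * (n : ℝ) + 2) * (((2 * n + 1).choose r : ℝ)) := by
    have := Nat.add_one_mul_choose_eq (2 * n + 1) r
    have h2 : (2 * n + 2) * (2 * n + 1).choose r = (2 * n + 2).choose (r + 1) * (r + 1) := by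
      simpa [Nat.succ_eq_add_one] using this
    exact_mod_cast (congrArg (fun t : ℕ => (t : ℝ)) h2).symm
  have hn1 : ((n : ℝ) + 1) ≠ 0 := by positivity
  have h22 : 2 * (n + 1) = 2 * n + 2 := by omega
  rw [h22]
  have hxp : x ^ (2 * n + 2) = x ^ (2 * n + 1) * x := by rw [← pow_succ]
  rw [hxp]
  field_simp
  linear_combination key

set_option maxHeartbeats 1000000 in
lemma my_odd_sum {m : ℕ} (hm2 : 2 ≤ m) :
    Summable (fun k : ℕ => (1 / (4 * (k : ℝ) + 3)) ^ m) ∧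
    Summable (fun k : ℕ => (1 / (4 * (k : ℝ) + 5)) ^ m) ∧
    (∑' k : ℕ, (1 / (4 * (k : ℝ) + 3)) ^ m) + (∑' k : ℕ, (1 / (4 * (k : ℝ) + 5)) ^ m)
      = zetaR m * (1 - 1 / 2 ^ m) - 1 := by
  set g : ℕ → ℝ := fun j => 1 / ((j : ℝ) + 1) ^ m with hg
  have hgs : Summable g := my_summable_zeta_term hm2
  have inj2 : Function.Injective (fun k : ℕ => 2 * k) := fun a b h => by simp only at h; omega
  have inj2' : Function.Injective (fun k : ℕ => 2 * k + 1) := fun a b h => by simp only at h; omega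
  have inj42 : Function.Injective (fun k : ℕ => 4 * k + 2) := fun a b h => by simp only at h; omega
  have inj44 : Function.Injective (fun k : ℕ => 4 * k + 4) := fun a b h => by simp only at h; omega
  have hse : Summable (fun k : ℕ => g (2 * k)) := hgs.comp_injective inj2
  have hso : Summable (fun k : ℕ => g (2 * k + 1)) := hgs.comp_injective inj2'
  have hs42 : Summable (fun k : ℕ => g (4 * k + 2)) := hgs.comp_injective inj42
  have hs44 : Summable (fun k : ℕ => g (4 * k + 4)) := hgs.comp_injective inj44
  have h34 : ∀ k : ℕ, (1 / (4 * (k : ℝ) + 3)) ^ m = g (4 * k + 2) := by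
    intro k
    simp only [hg, div_pow, one_pow]
    push_cast
    ring_nf
  have h54 : ∀ k : ℕ, (1 / (4 * (k : ℝ) + 5)) ^ m = g (4 * k + 4) := by
    intro k
    simp only [hg, div_pow, one_pow]
    push_cast
    ring_nf
  have hzg : zetaR m = ∑' k, g k := rfl
  -- even/odd split of g
  have hEO : (∑' k, g (2 * k)) + (∑' k, g (2 * k + 1)) = zetaR m := by
    rw [hzg]; exact tsum_even_add_odd hse hso
  have hodd_term : ∀ k : ℕ, g (2 * k + 1) = (1 / 2 ^ m) * g k := by
    intro k
    simp only [hg]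
    push_cast
    rw [show ((2 * (k : ℝ) + 1) + 1) = 2 * ((k : ℝ) + 1) by ring, mul_pow]
    rw [one_div, one_div, one_div, mul_inv]
  have hodd_val : (∑' k, g (2 * k + 1)) = (1 / 2 ^ m) * zetaR m := by
    rw [tsum_congr hodd_term, tsum_mul_left, hzg]
  have heven_val : (∑' k, g (2 * k)) = zetaR m * (1 - 1 / 2 ^ m) := by
    have := hEO
    rw [hodd_val] at this
    linarith [this]
  -- strip first term of even part
  have hstrip : (∑' k, g (2 * k)) = 1 + ∑' k, g (2 * (k + 1)) := by
    have h0 : g (2 * 0) = 1 := by simp [hg]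
    have := Summable.tsum_eq_zero_add hse
    rw [h0] at this
    simpa using this
  -- even/odd split of shifted
  have hs42' : Summable (fun k : ℕ => g (2 * (2 * k) + 2)) := by
    refine hs42.congr fun k => congrArg g (by omega)
  have hs44' : Summable (fun k : ℕ => g (2 * (2 * k + 1) + 2)) := by
    refine hs44.congr fun k => congrArg g (by omega)
  have hEO2 : (∑' k, g (2 * (2 * k) + 2)) + (∑' k, g (2 * (2 * k + 1) + 2))
      = ∑' k, g (2 * k + 2) := tsum_even_add_odd (f := fun k => g (2 * k + 2)) hs42' hs44'
  have e1 : (∑' k, g (2 * (2 * k) + 2)) = ∑' k : ℕ, (1 / (4 * (k : ℝ) + 3)) ^ m := by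
    refine tsum_congr fun k => ?_
    rw [h34 k]
    exact congrArg g (by omega)
  have e2 : (∑' k, g (2 * (2 * k + 1) + 2)) = ∑' k : ℕ, (1 / (4 * (k : ℝ) + 5)) ^ m := by
    refine tsum_congr fun k => ?_
    rw [h54 k]
    exact congrArg g (by omega)
  have e3 : (∑' k, g (2 * (k + 1))) = ∑' k, g (2 * k + 2) :=
    tsum_congr fun k => congrArg g (by omega)
  refine ⟨(hs42.congr fun k => (h34 k).symm), (hs44.congr fun k => (h54 k).symm), ?_⟩
  rw [← e1, ← e2, hEO2, ← e3]
  have : (1 : ℝ) + ∑' k, g (2 * (k + 1)) = zetaR m * (1 - 1 / 2 ^ m) := by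
    rw [← hstrip, heven_val]
  linarith [this]

set_option maxHeartbeats 800000 in
theorem zeta_binom_sixteen_even (m : ℕ) (hm : Even m) (hm0 : 0 < m) :
    ∑' n : ℕ, zetaR (2 * (n + 1)) / (((n : ℝ) + 1) * 16 ^ (n + 1)) *
      (Nat.choose (2 * (n + 1)) m : ℝ) =
      (1 / (m : ℝ)) * (zetaR m * (1 - 1 / 2 ^ m) - 1) := by
  have hm2 : 2 ≤ m := by obtain ⟨c, hc⟩ := hm; omega
  set f : ℕ → ℕ → ℝ := fun n k =>
    ((2 * (n + 1)).choose m : ℝ) / ((n : ℝ) + 1) *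
      (1 / (4 * ((k : ℝ) + 1))) ^ (2 * (n + 1)) with hf
  have hrw : ∀ n k : ℕ, f n k =
      (((2 * (n + 1)).choose m : ℝ) / (((n : ℝ) + 1) * 16 ^ (n + 1))) *
        (1 / ((k : ℝ) + 1) ^ (2 * (n + 1))) := by
    intro n k
    have h16 : (16 : ℝ) ^ (n + 1) = 4 ^ (2 * (n + 1)) := by
      rw [pow_mul]; norm_num
    have hn1 : ((n : ℝ) + 1) ≠ 0 := by positivity
    have hk1 : ((k : ℝ) + 1) ≠ 0 := by positivity
    simp only [hf]
    rw [div_pow, one_pow, mul_pow, ← h16, div_mul_div_comm, div_mul_div_comm]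
    ring
  have hrowS : ∀ n : ℕ, Summable (f n) := by
    intro n
    have h := (my_summable_zeta_term (show 2 ≤ 2 * (n + 1) by omega)).mul_left
      (((2 * (n + 1)).choose m : ℝ) / (((n : ℝ) + 1) * 16 ^ (n + 1)))
    exact h.congr fun k => (hrw n k).symm
  have hrow_sum : ∀ n : ℕ, ∑' k, f n k =
      zetaR (2 * (n + 1)) / (((n : ℝ) + 1) * 16 ^ (n + 1)) *
        ((2 * (n + 1)).choose m : ℝ) := by
    intro n
    rw [tsum_congr (fun k => hrw n k), tsum_mul_left]
    rw [zetaR]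
    ring
  have hpos : ∀ p : ℕ × ℕ, 0 ≤ f p.1 p.2 := by
    intro p
    simp only [hf]
    positivity
  have hzeta2 : Summable (fun k : ℕ => 1 / ((k : ℝ) + 1) ^ 2) := my_summable_zeta_term le_rfl
  have hz2nonneg : 0 ≤ zetaR 2 := tsum_nonneg fun k => by positivity
  have hboundz : ∀ n : ℕ, zetaR (2 * (n + 1)) ≤ zetaR 2 := by
    intro n
    apply Summable.tsum_le_tsum _ (my_summable_zeta_term (by omega)) hzeta2
    intro k
    apply one_div_le_one_div_of_le (by positivity)
    exact pow_le_pow_right₀ (by simp [le_add_iff_nonneg_left]) (by omega)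
  have hsumRows : Summable (fun n : ℕ => ∑' k, f n k) := by
    have hgeo : Summable (fun n : ℕ => zetaR 2 * (1 / 4 : ℝ) ^ (n + 1)) := by
      have h := summable_geometric_of_lt_one (by norm_num : (0:ℝ) ≤ 1/4) (by norm_num)
      exact (h.mul_left (zetaR 2 * (1 / 4))).congr fun n => by rw [pow_succ]; ring
    apply Summable.of_nonneg_of_le (fun n => tsum_nonneg fun k => hpos (n, k)) _ hgeo
    intro n
    rw [hrow_sum n]
    have hC : ((2 * (n + 1)).choose m : ℝ) ≤ 4 ^ (n + 1) := by
      calc ((2 * (n + 1)).choose m : ℝ) ≤ (2 : ℝ) ^ (2 * (n + 1)) := by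
            exact_mod_cast my_choose_le_two_pow (2 * (n + 1)) m
        _ = 4 ^ (n + 1) := by rw [pow_mul]; norm_num
    have h1 : zetaR (2 * (n + 1)) / (((n : ℝ) + 1) * 16 ^ (n + 1))
        ≤ zetaR 2 / 16 ^ (n + 1) := by
      apply div_le_div₀ hz2nonneg (hboundz n) (by positivity)
      exact le_mul_of_one_le_left (by positivity) (by exact_mod_cast Nat.le_add_left 1 n)
    calc zetaR (2 * (n + 1)) / (((n : ℝ) + 1) * 16 ^ (n + 1)) * ((2 * (n + 1)).choose m : ℝ)
        ≤ zetaR 2 / 16 ^ (n + 1) * 4 ^ (n + 1) := by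
          apply mul_le_mul h1 hC (by positivity)
          positivity
      _ = zetaR 2 * (1 / 4 : ℝ) ^ (n + 1) := by
          rw [div_pow, one_pow]
          rw [show (16 : ℝ) = 4 * 4 by norm_num, mul_pow]
          have : (4 : ℝ) ^ (n + 1) ≠ 0 := by positivity
          field_simp
  have huncurry : Summable (Function.uncurry f) :=
    (summable_prod_of_nonneg (fun p => hpos p)).2 ⟨hrowS, hsumRows⟩
  obtain ⟨s3, s5, hval⟩ := my_odd_sum hm2
  calc ∑' n : ℕ, zetaR (2 * (n + 1)) / (((n : ℝ) + 1) * 16 ^ (n + 1)) *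
        ((2 * (n + 1)).choose m : ℝ)
      = ∑' n, ∑' k, f n k := tsum_congr fun n => (hrow_sum n).symm
    _ = ∑' k, ∑' n, f n k := (Summable.tsum_comm huncurry).symm
    _ = ∑' k : ℕ, (1 / (m : ℝ)) *
          ((1 / (4 * (k : ℝ) + 3)) ^ m + (1 / (4 * (k : ℝ) + 5)) ^ m) := by
        refine tsum_congr fun k => ?_
        have hx0 : (0 : ℝ) < 1 / (4 * ((k : ℝ) + 1)) := by positivity
        have hx1 : 1 / (4 * ((k : ℝ) + 1)) < 1 := by
          rw [div_lt_one (by positivity)]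
          nlinarith [Nat.cast_nonneg (α := ℝ) k]
        have h := (my_hasSum_inner hm hm0 hx0 hx1).tsum_eq
        have h4 : (4 * ((k : ℝ) + 1)) ≠ 0 := by positivity
        have ha : (1 / (4 * ((k : ℝ) + 1))) / (1 - 1 / (4 * ((k : ℝ) + 1)))
            = 1 / (4 * (k : ℝ) + 3) := by
          have h3 : (4 * (k : ℝ) + 3) ≠ 0 := by positivity
          have hne : 1 - 1 / (4 * ((k : ℝ) + 1)) ≠ 0 := by
            rw [sub_ne_zero]
            intro hcon
            nlinarith [hx1]
          rw [eq_div_iff h3]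
          have h3' : (3 : ℝ) + (k : ℝ) * 4 ≠ 0 := by positivity
          field_simp
          rw [show (4 * ((k:ℝ) + 1) - 1) = 4 * (k:ℝ) + 3 by ring, div_self h3]
        have hb : (1 / (4 * ((k : ℝ) + 1))) / (1 + 1 / (4 * ((k : ℝ) + 1)))
            = 1 / (4 * (k : ℝ) + 5) := by
          have h5 : (4 * (k : ℝ) + 5) ≠ 0 := by positivity
          have hne : 1 + 1 / (4 * ((k : ℝ) + 1)) ≠ 0 := by positivity
          rw [eq_div_iff h5]
          have h5' : (5 : ℝ) + (k : ℝ) * 4 ≠ 0 := by positivity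
          field_simp
          ring
        rw [ha, hb] at h
        exact h
    _ = (1 / (m : ℝ)) * (zetaR m * (1 - 1 / 2 ^ m) - 1) := by
        rw [tsum_mul_left, Summable.tsum_add s3 s5, hval]
end

section
/- Σ_{n=1}^{∞} ζ(2n)·n/16^n = (π/16)·(π/2 − 1). -/
open Real

namespace ZetaSixteenAux

open Filter Finset

noncomputable def F (k n : ℕ) : ℝ := ((n : ℝ) + 1) * (1 / (16 * ((k : ℝ) + 1) ^ 2)) ^ (n + 1)

noncomputable def g (k : ℕ) : ℝ :=
  (1/4) * (1 / (4 * (k : ℝ) + 3) ^ 2 + 1 / (4 * (k : ℝ) + 5) ^ 2)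
    + (1/4) * (1 / (4 * (k : ℝ) + 3) - 1 / (4 * (k : ℝ) + 5))

lemma summable_inv_sq : Summable (fun k : ℕ => 1 / ((k : ℝ) + 1) ^ 2) := by
  have h : Summable (fun n : ℕ => 1 / (n : ℝ) ^ 2) :=
    Real.summable_one_div_nat_pow.mpr one_lt_two
  exact ((summable_nat_add_iff 1).mpr h).congr fun k => by push_cast; ring_nf

lemma hasSum_row (k : ℕ) : HasSum (fun n : ℕ => F k n) (g k) := by
  have hx : (0:ℝ) < (k : ℝ) + 1 := by positivity
  set r : ℝ := 1 / (16 * ((k : ℝ) + 1) ^ 2) with hrdef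
  have hr0 : 0 < r := by positivity
  have hr1 : r < 1 := by
    rw [hrdef, div_lt_one (by positivity)]
    nlinarith
  have hgeo : HasSum (fun n : ℕ => (n : ℝ) * r ^ n) (r / (1 - r) ^ 2) :=
    hasSum_coe_mul_geometric_of_norm_lt_one
      (by rw [Real.norm_eq_abs, abs_of_pos hr0]; exact hr1)
  have hshift : HasSum (fun n : ℕ => ((n + 1 : ℕ) : ℝ) * r ^ (n + 1)) (r / (1 - r) ^ 2) :=
    (hasSum_nat_add_iff (f := fun n : ℕ => (n : ℝ) * r ^ n) 1).mpr (by simpa using hgeo)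
  have hfun : (fun n : ℕ => F k n) = fun n : ℕ => ((n + 1 : ℕ) : ℝ) * r ^ (n + 1) := by
    funext n; simp only [F]; push_cast; ring
  have hval : r / (1 - r) ^ 2 = g k := by
    have h3 : (4 * (k : ℝ) + 3) ≠ 0 := by positivity
    have h5 : (4 * (k : ℝ) + 5) ≠ 0 := by positivity
    have h16 : (16 * ((k : ℝ) + 1) ^ 2) ≠ 0 := by positivity
    have h1r : (1:ℝ) - r ≠ 0 := by linarith
    rw [div_eq_iff (pow_ne_zero 2 h1r)]
    simp only [g, hrdef]
    field_simp
    ring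
  rw [hfun, ← hval]
  exact hshift

lemma hasSum_odd_sq : HasSum (fun j : ℕ => 1 / (2 * (j : ℝ) + 1) ^ 2) (π ^ 2 / 8) := by
  have h : HasSum (fun n : ℕ => 1 / (n : ℝ) ^ 2) (π ^ 2 / 6) := hasSum_zeta_two
  have heven : HasSum (fun j : ℕ => 1 / ((2 * j : ℕ) : ℝ) ^ 2) (π ^ 2 / 24) := by
    have h4 := h.mul_left (1/4)
    have hf : (fun j : ℕ => 1 / ((2 * j : ℕ) : ℝ) ^ 2)
        = fun j : ℕ => 1/4 * (1 / (j : ℝ) ^ 2) := by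
      funext j; push_cast; rw [mul_pow]; ring
    rw [hf]
    convert h4 using 1
    · rfl
    ring
  have sodd : Summable (fun j : ℕ => 1 / (2 * (j : ℝ) + 1) ^ 2) := by
    refine Summable.of_nonneg_of_le (fun j => by positivity) (fun j => ?_) summable_inv_sq
    exact one_div_le_one_div_of_le (by positivity)
      (by nlinarith [Nat.cast_nonneg (α := ℝ) j])
  obtain ⟨T, hT⟩ := sodd
  have hT' : HasSum (fun j : ℕ => 1 / ((2 * j + 1 : ℕ) : ℝ) ^ 2) T := by
    have hf : (fun j : ℕ => 1 / ((2 * j + 1 : ℕ) : ℝ) ^ 2)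
        = fun j : ℕ => 1 / (2 * (j : ℝ) + 1) ^ 2 := by
      funext j; push_cast; ring
    rw [hf]; exact hT
  have hcomb := HasSum.even_add_odd (f := fun n : ℕ => 1 / (n : ℝ) ^ 2) heven hT'
  have huniq := h.unique hcomb
  have hTval : T = π ^ 2 / 8 := by linarith
  rwa [hTval] at hT

lemma hasSum_shift_odd_sq :
    HasSum (fun j : ℕ => 1 / (2 * (j : ℝ) + 3) ^ 2) (π ^ 2 / 8 - 1) := by
  have h0 : HasSum (fun j : ℕ => 1 / (2 * ((j + 1 : ℕ) : ℝ) + 1) ^ 2) (π ^ 2 / 8 - 1) := by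
    refine (hasSum_nat_add_iff (f := fun j : ℕ => 1 / (2 * (j : ℝ) + 1) ^ 2) 1).mpr ?_
    simpa using hasSum_odd_sq
  have hf : (fun j : ℕ => 1 / (2 * ((j + 1 : ℕ) : ℝ) + 1) ^ 2)
      = fun j : ℕ => 1 / (2 * (j : ℝ) + 3) ^ 2 := by
    funext j; push_cast; ring_nf
  rwa [hf] at h0

lemma summable_s1 : Summable (fun k : ℕ => 1 / (4 * (k : ℝ) + 3) ^ 2) := by
  refine Summable.of_nonneg_of_le (fun k => by positivity) (fun k => ?_) summable_inv_sq
  exact one_div_le_one_div_of_le (by positivity) (by nlinarith [Nat.cast_nonneg (α := ℝ) k])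

lemma summable_s2 : Summable (fun k : ℕ => 1 / (4 * (k : ℝ) + 5) ^ 2) := by
  refine Summable.of_nonneg_of_le (fun k => by positivity) (fun k => ?_) summable_inv_sq
  exact one_div_le_one_div_of_le (by positivity) (by nlinarith [Nat.cast_nonneg (α := ℝ) k])

lemma hasSum_A1 :
    HasSum (fun k : ℕ => 1 / (4 * (k : ℝ) + 3) ^ 2 + 1 / (4 * (k : ℝ) + 5) ^ 2)
      (π ^ 2 / 8 - 1) := by
  obtain ⟨T1, h1⟩ := summable_s1
  obtain ⟨T2, h2⟩ := summable_s2
  have hf1 : (fun x : ℕ => 1 / (2 * (((2 * x : ℕ)) : ℝ) + 3) ^ 2)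
      = fun x : ℕ => 1 / (4 * (x : ℝ) + 3) ^ 2 := by
    funext x; push_cast; ring_nf
  have hf2 : (fun x : ℕ => 1 / (2 * (((2 * x + 1 : ℕ)) : ℝ) + 3) ^ 2)
      = fun x : ℕ => 1 / (4 * (x : ℝ) + 5) ^ 2 := by
    funext x; push_cast; ring_nf
  have h1' : HasSum (fun x : ℕ => 1 / (2 * (((2 * x : ℕ)) : ℝ) + 3) ^ 2) T1 := by
    rw [hf1]; exact h1
  have h2' : HasSum (fun x : ℕ => 1 / (2 * (((2 * x + 1 : ℕ)) : ℝ) + 3) ^ 2) T2 := by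
    rw [hf2]; exact h2
  have hcomb := HasSum.even_add_odd (f := fun j : ℕ => 1 / (2 * (j : ℝ) + 3) ^ 2) h1' h2'
  have huniq := hasSum_shift_odd_sq.unique hcomb
  have := h1.add h2
  rwa [← huniq] at this

lemma summable_t : Summable (fun k : ℕ => 1 / (4 * (k : ℝ) + 3) - 1 / (4 * (k : ℝ) + 5)) := by
  refine Summable.of_nonneg_of_le (fun k => ?_) (fun k => ?_) (summable_inv_sq.mul_left 2)
  · have h3 : (0:ℝ) < 4 * (k : ℝ) + 3 := by positivity
    have h5 : (0:ℝ) < 4 * (k : ℝ) + 5 := by positivity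
    have : 1 / (4 * (k : ℝ) + 5) ≤ 1 / (4 * (k : ℝ) + 3) :=
      one_div_le_one_div_of_le h3 (by linarith)
    linarith
  · have h3 : (0:ℝ) < 4 * (k : ℝ) + 3 := by positivity
    have h5 : (0:ℝ) < 4 * (k : ℝ) + 5 := by positivity
    have hk : (0:ℝ) ≤ (k : ℝ) := Nat.cast_nonneg k
    rw [div_sub_div _ _ (ne_of_gt h3) (ne_of_gt h5)]
    have hnum : (1:ℝ) * (4 * (k : ℝ) + 5) - (4 * (k : ℝ) + 3) * 1 = 2 := by ring
    rw [hnum]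
    have hle : 1 / ((4 * (k : ℝ) + 3) * (4 * (k : ℝ) + 5)) ≤ 1 / (((k : ℝ) + 1) ^ 2) :=
      one_div_le_one_div_of_le (by positivity) (by nlinarith)
    calc (2:ℝ) / ((4 * (k : ℝ) + 3) * (4 * (k : ℝ) + 5))
        = 2 * (1 / ((4 * (k : ℝ) + 3) * (4 * (k : ℝ) + 5))) := by ring
      _ ≤ 2 * (1 / (((k : ℝ) + 1) ^ 2)) := by linarith
lemma hasSum_A2 :
    HasSum (fun k : ℕ => 1 / (4 * (k : ℝ) + 3) - 1 / (4 * (k : ℝ) + 5)) (1 - π / 4) := by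
  obtain ⟨T, hT⟩ := summable_t
  have hpar : ∀ N : ℕ,
      ∑ k ∈ range N, (1 / (4 * (k : ℝ) + 3) - 1 / (4 * (k : ℝ) + 5))
        = 1 - ∑ i ∈ range (2 * N + 1), (-1 : ℝ) ^ i / (2 * (i : ℝ) + 1) := by
    intro N
    induction N with
    | zero => simp
    | succ n ih =>
      have e1 : ((-1 : ℝ)) ^ (2 * n + 1) = -1 := by
        rw [pow_succ, pow_mul]; norm_num
      have e2 : ((-1 : ℝ)) ^ (2 * n + 1 + 1) = 1 := by
        rw [pow_succ, e1]; norm_num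
      have hsplit : ∑ i ∈ range (2 * (n + 1) + 1), (-1 : ℝ) ^ i / (2 * (i : ℝ) + 1)
          = (∑ i ∈ range (2 * n + 1), (-1 : ℝ) ^ i / (2 * (i : ℝ) + 1))
            + ((-1 : ℝ) ^ (2 * n + 1) / (2 * ((2 * n + 1 : ℕ) : ℝ) + 1)
               + (-1 : ℝ) ^ (2 * n + 1 + 1) / (2 * ((2 * n + 1 + 1 : ℕ) : ℝ) + 1)) := by
        rw [show 2 * (n + 1) + 1 = 2 * n + 1 + 1 + 1 from by ring,
          Finset.sum_range_succ, Finset.sum_range_succ]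
        ring
      rw [Finset.sum_range_succ, ih, hsplit, e1, e2]
      push_cast
      ring
  have h1 : Tendsto (fun N : ℕ => ∑ k ∈ range N,
      (1 / (4 * (k : ℝ) + 3) - 1 / (4 * (k : ℝ) + 5))) atTop (nhds T) :=
    hT.tendsto_sum_nat
  have hmono : Tendsto (fun N : ℕ => 2 * N + 1) atTop atTop :=
    tendsto_atTop_atTop.mpr fun b => ⟨b, fun a ha => by omega⟩
  have h2 : Tendsto (fun N : ℕ => (1:ℝ) - ∑ i ∈ range (2 * N + 1),
      (-1 : ℝ) ^ i / (2 * (i : ℝ) + 1)) atTop (nhds (1 - π / 4)) :=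
    tendsto_const_nhds.sub (Real.tendsto_sum_pi_div_four.comp hmono)
  have h1' : Tendsto (fun N : ℕ => (1:ℝ) - ∑ i ∈ range (2 * N + 1),
      (-1 : ℝ) ^ i / (2 * (i : ℝ) + 1)) atTop (nhds T) := h1.congr hpar
  have hTval := tendsto_nhds_unique h1' h2
  rwa [hTval] at hT

lemma hasSum_g : HasSum g ((π / 16) * (π / 2 - 1)) := by
  have h := (hasSum_A1.mul_left (1/4)).add (hasSum_A2.mul_left (1/4))
  have hv : ((1:ℝ)/4 * (π ^ 2 / 8 - 1) + 1/4 * (1 - π / 4)) = (π / 16) * (π / 2 - 1) := by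
    ring
  rw [hv] at h
  exact h

lemma summable_col (n : ℕ) : Summable (fun k : ℕ => F k n) := by
  refine Summable.of_nonneg_of_le (fun k => by simp only [F]; positivity) (fun k => ?_)
    (summable_inv_sq.mul_left ((n : ℝ) + 1))
  simp only [F]
  have hx : (0:ℝ) < (k : ℝ) + 1 := by positivity
  have hr0 : (0:ℝ) ≤ 1 / (16 * ((k : ℝ) + 1) ^ 2) := by positivity
  have hr1 : 1 / (16 * ((k : ℝ) + 1) ^ 2) ≤ 1 / ((k : ℝ) + 1) ^ 2 :=
    one_div_le_one_div_of_le (by positivity) (by nlinarith)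
  have hr1' : 1 / (16 * ((k : ℝ) + 1) ^ 2) ≤ 1 :=
    le_trans hr1 (by rw [div_le_one (by positivity)]; nlinarith)
  have hpow : (1 / (16 * ((k : ℝ) + 1) ^ 2)) ^ (n + 1) ≤ 1 / ((k : ℝ) + 1) ^ 2 :=
    calc (1 / (16 * ((k : ℝ) + 1) ^ 2)) ^ (n + 1)
        ≤ (1 / (16 * ((k : ℝ) + 1) ^ 2)) ^ 1 :=
          pow_le_pow_of_le_one hr0 hr1' (by omega)
      _ = 1 / (16 * ((k : ℝ) + 1) ^ 2) := pow_one _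
      _ ≤ 1 / ((k : ℝ) + 1) ^ 2 := hr1
  have hn : (0:ℝ) ≤ (n : ℝ) + 1 := by positivity
  exact mul_le_mul_of_nonneg_left hpow hn

lemma summable_uncurry : Summable (Function.uncurry (fun k n : ℕ => F k n)) := by
  refine (summable_prod_of_nonneg ?_).mpr ⟨fun k => (hasSum_row k).summable, ?_⟩
  · intro p
    simp only [Function.uncurry, F]
    positivity
  · exact hasSum_g.summable.congr fun k => ((hasSum_row k).tsum_eq).symm

end ZetaSixteenAux

open ZetaSixteenAux in
theorem zeta_series_sixteen_n :
    ∑' n : ℕ, zetaR (2 * (n + 1)) * ((n : ℝ) + 1) / 16 ^ (n + 1) =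
      (π / 16) * (π / 2 - 1) := by
  have hterm : ∀ n : ℕ,
      zetaR (2 * (n + 1)) * ((n : ℝ) + 1) / 16 ^ (n + 1) = ∑' k : ℕ, F k n := by
    intro n
    have hfun : (fun k : ℕ => F k n)
        = fun k : ℕ => (((n : ℝ) + 1) / 16 ^ (n + 1)) * (1 / ((k : ℝ) + 1) ^ (2 * (n + 1))) := by
      funext k
      have hx : ((k : ℝ) + 1) ≠ 0 := by positivity
      simp only [F]
      rw [div_pow, one_pow, mul_pow, pow_mul]
      simp only [one_div, mul_inv]
      ring
    rw [hfun, tsum_mul_left, zetaR]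
    ring
  calc ∑' n : ℕ, zetaR (2 * (n + 1)) * ((n : ℝ) + 1) / 16 ^ (n + 1)
      = ∑' n : ℕ, ∑' k : ℕ, F k n := tsum_congr hterm
    _ = ∑' k : ℕ, ∑' n : ℕ, F k n :=
        Summable.tsum_comm' summable_uncurry (fun k => (hasSum_row k).summable) summable_col
    _ = ∑' k : ℕ, g k := tsum_congr fun k => (hasSum_row k).tsum_eq
    _ = (π / 16) * (π / 2 - 1) := hasSum_g.tsum_eq
end
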